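/- Suppose there exist quaternary GCM pairs of sizes s_1×s_2, s_1×s_3, and t_1×t_2. Then there exists a quaternary GCM quad of size s_1t_1 × (s_2+s_3)t_2. -/

import Mathlib

open scoped BigOperators

/-- Aperiodic autocorrelation of a complex sequence (indexed by ℤ). -/
noncomputable def seqAutocorr (a : ℤ → ℂ) (δ : ℤ) : ℂ :=
  ∑ᶠ i : ℤ, a i * (starRingEnd ℂ) (a (i - δ))

/-- Weight of a sequence. -/
noncomputable def seqWeight (a : ℤ → ℂ) : ℝ :=
  ∑ᶠ i : ℤ, ‖a i‖ ^ 2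

/-- Index lies in `[0, L)`. -/
def seqInBox (L : ℕ) (i : ℤ) : Prop := 0 ≤ i ∧ i < (L : ℤ)

/-- A polyphase sequence of length `L`: zero outside `[0, L)` and all entries inside
are `N`-th roots of unity for some `N`. -/
def seqPolyphase (L : ℕ) (a : ℤ → ℂ) : Prop :=
  (∀ i, ¬ seqInBox L i → a i = 0) ∧
    ∃ N : ℕ, 0 < N ∧ ∀ i, seqInBox L i → a i ^ N = 1

/-- Aperiodic autocorrelation of a complex matrix (indexed by ℤ × ℤ). -/
noncomputable def matAutocorr (A : ℤ → ℤ → ℂ) (δ₁ δ₂ : ℤ) : ℂ :=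
  ∑ᶠ (i : ℤ) (j : ℤ), A i j * (starRingEnd ℂ) (A (i - δ₁) (j - δ₂))

/-- Weight of a matrix. -/
noncomputable def matWeight (A : ℤ → ℤ → ℂ) : ℝ :=
  ∑ᶠ (i : ℤ) (j : ℤ), ‖A i j‖ ^ 2

/-- Index pair lies in `[0, m) × [0, n)`. -/
def matInBox (m n : ℕ) (i j : ℤ) : Prop :=
  0 ≤ i ∧ i < (m : ℤ) ∧ 0 ≤ j ∧ j < (n : ℤ)

/-- A polyphase matrix of size `m × n`. -/
def matPolyphase (m n : ℕ) (A : ℤ → ℤ → ℂ) : Prop :=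
  (∀ i j, ¬ matInBox m n i j → A i j = 0) ∧
    ∃ N : ℕ, 0 < N ∧ ∀ i j, matInBox m n i j → A i j ^ N = 1

/-- A quaternary matrix of size `m × n`: entries in {1, −1, i, −i} inside the box,
zero outside. -/
def matQuaternary (m n : ℕ) (A : ℤ → ℤ → ℂ) : Prop :=
  (∀ i j, ¬ matInBox m n i j → A i j = 0) ∧
    ∀ i j, matInBox m n i j →
      A i j = 1 ∨ A i j = -1 ∨ A i j = Complex.I ∨ A i j = -Complex.I

/-- Existence of a quaternary GCM pair of size `m × n`. -/
def QuatGCMPair (m n : ℕ) : Prop :=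
  ∃ A B : ℤ → ℤ → ℂ, matQuaternary m n A ∧ matQuaternary m n B ∧
    ∀ δ₁ δ₂ : ℤ, matAutocorr A δ₁ δ₂ + matAutocorr B δ₁ δ₂ =
      if δ₁ = 0 ∧ δ₂ = 0 then ((matWeight A + matWeight B : ℝ) : ℂ) else 0

/-- Existence of a quaternary GCM quad of size `m × n`. -/
def QuatGCMQuad (m n : ℕ) : Prop :=
  ∃ A B C D : ℤ → ℤ → ℂ, matQuaternary m n A ∧ matQuaternary m n B ∧
    matQuaternary m n C ∧ matQuaternary m n D ∧
    ∀ δ₁ δ₂ : ℤ,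
      matAutocorr A δ₁ δ₂ + matAutocorr B δ₁ δ₂ + matAutocorr C δ₁ δ₂ +
          matAutocorr D δ₁ δ₂ =
        if δ₁ = 0 ∧ δ₂ = 0 then
          ((matWeight A + matWeight B + matWeight C + matWeight D : ℝ) : ℂ)
        else 0

namespace GCM

abbrev R := AddMonoidAlgebra ℂ (ℤ × ℤ)

noncomputable instance : CoeFun R (fun _ => ℤ × ℤ → ℂ) := ⟨fun x => ⇑x.coeff⟩

noncomputable def invol (x : R) : R :=
  AddMonoidAlgebra.ofCoeff
    (Finsupp.mapRange (starRingEnd ℂ) (map_zero _) (Finsupp.equivMapDomain (Equiv.neg (ℤ × ℤ)) x.coeff))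

lemma invol_apply (x : R) (p : ℤ × ℤ) : invol x p = (starRingEnd ℂ) (x (-p)) := by
  simp [invol, Finsupp.mapRange_apply, Finsupp.equivMapDomain_apply]

lemma invol_ext {x y : R} (h : ∀ p : ℤ × ℤ, x p = y p) : x = y := AddMonoidAlgebra.ext (Finsupp.ext h)

@[simp] lemma R_add_apply (x y : R) (p : ℤ × ℤ) : (x + y) p = x p + y p := rfl
@[simp] lemma R_neg_apply (x : R) (p : ℤ × ℤ) : (-x) p = -(x p) := rfl
@[simp] lemma R_sub_apply (x y : R) (p : ℤ × ℤ) : (x - y) p = x p - y p := rfl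
@[simp] lemma R_smul_apply (r : ℂ) (x : R) (p : ℤ × ℤ) : (r • x) p = r * x p := rfl

@[simp] lemma invol_zero : invol (0 : R) = 0 := by
  apply invol_ext; intro p; simp [invol_apply]

lemma invol_add (x y : R) : invol (x + y) = invol x + invol y := by
  apply invol_ext; intro p
  simp [invol_apply, Finsupp.add_apply, map_add]

lemma invol_neg (x : R) : invol (-x) = - invol x := by
  apply invol_ext; intro p
  simp [invol_apply, Finsupp.neg_apply]

lemma invol_sub (x y : R) : invol (x - y) = invol x - invol y := by
  apply invol_ext; intro p
  simp [invol_apply, Finsupp.sub_apply, map_sub]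

lemma invol_single (a : ℤ × ℤ) (r : ℂ) :
    invol (AddMonoidAlgebra.single a r) = AddMonoidAlgebra.single (-a) ((starRingEnd ℂ) r) := by
  apply invol_ext; intro p
  rw [invol_apply]
  rcases eq_or_ne p (-a) with h | h
  · subst h; simp [AddMonoidAlgebra.coeff_single, Finsupp.single_apply]
  · have h1 : a ≠ -p := by intro hh; apply h; simp [hh]
    have h2 : -a ≠ p := by intro hh; apply h; simp [← hh]
    simp [AddMonoidAlgebra.coeff_single, Finsupp.single_apply, h1, h2]

lemma invol_invol (x : R) : invol (invol x) = x := by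
  apply invol_ext; intro p; simp [invol_apply]

lemma invol_smul (r : ℂ) (x : R) : invol (r • x) = (starRingEnd ℂ) r • invol x := by
  apply invol_ext; intro p
  simp [invol_apply, Finsupp.smul_apply, map_mul]

lemma invol_mul (x y : R) : invol (x * y) = invol x * invol y := by
  induction x using AddMonoidAlgebra.induction_linear with
  | zero => simp
  | add u v hu hv => rw [add_mul, invol_add, hu, hv, invol_add, add_mul]
  | single a r =>
    induction y using AddMonoidAlgebra.induction_linear with
    | zero => simp
    | add u v hu hv => rw [mul_add, invol_add, hu, hv, invol_add, mul_add]
    | single b s =>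
      show invol (AddMonoidAlgebra.single a r * AddMonoidAlgebra.single b s) = _
      rw [AddMonoidAlgebra.single_mul_single, invol_single, invol_single, invol_single,
        AddMonoidAlgebra.single_mul_single, neg_add, map_mul]


lemma R_sum_apply {ι : Type*} (S : Finset ι) (f : ι → R) (p : ℤ × ℤ) :
    (∑ i ∈ S, f i) p = ∑ i ∈ S, f i p := by rw [AddMonoidAlgebra.coeff_sum, Finsupp.finset_sum_apply]

lemma R_single_apply (a : ℤ × ℤ) (r : ℂ) (p : ℤ × ℤ) :
    (AddMonoidAlgebra.single a r : R) p = if a = p then r else 0 := Finsupp.single_apply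

noncomputable def boxF (m n : ℕ) : Finset (ℤ × ℤ) :=
  (Finset.Ico (0:ℤ) (m:ℤ)) ×ˢ (Finset.Ico (0:ℤ) (n:ℤ))

lemma mem_boxF {m n : ℕ} {p : ℤ × ℤ} : p ∈ boxF m n ↔ matInBox m n p.1 p.2 := by
  simp [boxF, Finset.mem_product, Finset.mem_Ico, matInBox, and_assoc]

noncomputable def toF (m n : ℕ) (A : ℤ → ℤ → ℂ) : R :=
  ∑ p ∈ boxF m n, AddMonoidAlgebra.single p (A p.1 p.2)

lemma toF_apply {m n : ℕ} {A : ℤ → ℤ → ℂ} (hA : ∀ i j, ¬ matInBox m n i j → A i j = 0)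
    (p : ℤ × ℤ) : toF m n A p = A p.1 p.2 := by
  classical
  rw [toF, R_sum_apply]
  by_cases hp : p ∈ boxF m n
  · rw [Finset.sum_eq_single_of_mem p hp]
    · simp [AddMonoidAlgebra.coeff_single, Finsupp.single_apply]
    · intro q hq hne
      simp [AddMonoidAlgebra.coeff_single, Finsupp.single_apply, hne]
  · rw [Finset.sum_eq_zero, hA p.1 p.2 (by rwa [← mem_boxF])]
    intro q hq
    have : q ≠ p := by rintro rfl; exact hp hq
    simp [AddMonoidAlgebra.coeff_single, Finsupp.single_apply, this]

lemma conv_apply (x y : R) (p : ℤ × ℤ) :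
    (x * y) p = ∑ q ∈ x.coeff.support, x q * y (p - q) := by
  classical
  rw [AddMonoidAlgebra.coeff_mul, Finsupp.sum]
  refine Finset.sum_congr rfl fun q hq => ?_
  rw [Finsupp.sum]
  calc (∑ a ∈ y.coeff.support, if q + a = p then x q * y a else 0)
      = ∑ a ∈ y.coeff.support, if a = p - q then x q * y a else 0 := by
        apply Finset.sum_congr rfl; intro a _
        by_cases h : a = p - q
        · subst h; simp
        · rw [if_neg h, if_neg fun hh => h (eq_sub_of_add_eq (by rwa [add_comm] at hh))]
    _ = x q * y (p - q) := by
        rw [Finset.sum_ite_eq' y.coeff.support (p - q) fun a => x q * y a]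
        by_cases h : p - q ∈ y.coeff.support
        · rw [if_pos h]
        · rw [if_neg h, Finsupp.notMem_support_iff.mp h, mul_zero]

lemma conv_invol_apply (x : R) (p : ℤ × ℤ) :
    (x * invol x) p = ∑ q ∈ x.coeff.support, x q * (starRingEnd ℂ) (x (q - p)) := by
  rw [conv_apply]
  apply Finset.sum_congr rfl
  intro q hq
  rw [invol_apply, neg_sub]

lemma autocorr_eq (x : R) (δ₁ δ₂ : ℤ) :
    matAutocorr (fun i j => x (i, j)) δ₁ δ₂ = (x * invol x) (δ₁, δ₂) := by
  classical
  set F : ℤ → ℤ → ℂ := fun i j => x (i, j) * (starRingEnd ℂ) (x (i - δ₁, j - δ₂)) with hF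
  set S₁ : Finset ℤ := x.coeff.support.image Prod.fst with hS₁
  set S₂ : Finset ℤ := x.coeff.support.image Prod.snd with hS₂
  have key : ∀ i j, F i j ≠ 0 → (i, j) ∈ x.coeff.support := by
    intro i j h
    rw [Finsupp.mem_support_iff]
    intro h0
    apply h
    rw [hF]
    simp only []
    rw [h0, zero_mul]
  have inner : ∀ i : ℤ, ∑ᶠ j : ℤ, F i j = ∑ j ∈ S₂, F i j := by
    intro i
    apply finsum_eq_finset_sum_of_support_subset
    intro j hj
    simp only [Function.mem_support] at hj
    exact Finset.mem_coe.mpr (Finset.mem_image.mpr ⟨(i, j), key i j hj, rfl⟩)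
  have houter : matAutocorr (fun i j => x (i, j)) δ₁ δ₂ = ∑ i ∈ S₁, ∑ j ∈ S₂, F i j := by
    rw [matAutocorr]
    rw [finsum_congr inner]
    apply finsum_eq_finset_sum_of_support_subset
    intro i hi
    simp only [Function.mem_support] at hi
    obtain ⟨j, hj1, hj2⟩ := Finset.exists_ne_zero_of_sum_ne_zero hi
    exact Finset.mem_coe.mpr (Finset.mem_image.mpr ⟨(i, j), key i j hj2, rfl⟩)
  rw [houter, ← Finset.sum_product', conv_invol_apply]
  have hsub : x.coeff.support ⊆ S₁ ×ˢ S₂ := by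
    intro p hp
    rw [Finset.mem_product]
    exact ⟨Finset.mem_image.mpr ⟨p, hp, rfl⟩, Finset.mem_image.mpr ⟨p, hp, rfl⟩⟩
  rw [Finset.sum_subset hsub (fun p _ hnp => by
    rw [Finsupp.notMem_support_iff.mp hnp, zero_mul])]
  apply Finset.sum_congr rfl
  rintro ⟨i, j⟩ _
  show F i j = _
  rw [hF]
  simp only [Prod.mk_sub_mk]

lemma weight_eq (x : R) :
    ((matWeight (fun i j => x (i, j)) : ℝ) : ℂ) = (x * invol x) (0, 0) := by
  classical
  set F : ℤ → ℤ → ℝ := fun i j => ‖x (i, j)‖ ^ 2 with hF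
  set S₁ : Finset ℤ := x.coeff.support.image Prod.fst with hS₁
  set S₂ : Finset ℤ := x.coeff.support.image Prod.snd with hS₂
  have key : ∀ i j, F i j ≠ 0 → (i, j) ∈ x.coeff.support := by
    intro i j h
    rw [Finsupp.mem_support_iff]
    intro h0
    apply h
    rw [hF]
    simp only []
    rw [h0]
    simp
  have inner : ∀ i : ℤ, ∑ᶠ j : ℤ, F i j = ∑ j ∈ S₂, F i j := by
    intro i
    apply finsum_eq_finset_sum_of_support_subset
    intro j hj
    simp only [Function.mem_support] at hj
    exact Finset.mem_coe.mpr (Finset.mem_image.mpr ⟨(i, j), key i j hj, rfl⟩)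
  have houter : matWeight (fun i j => x (i, j)) = ∑ i ∈ S₁, ∑ j ∈ S₂, F i j := by
    rw [matWeight, finsum_congr inner]
    apply finsum_eq_finset_sum_of_support_subset
    intro i hi
    simp only [Function.mem_support] at hi
    obtain ⟨j, hj1, hj2⟩ := Finset.exists_ne_zero_of_sum_ne_zero hi
    exact Finset.mem_coe.mpr (Finset.mem_image.mpr ⟨(i, j), key i j hj2, rfl⟩)
  have hsub : x.coeff.support ⊆ S₁ ×ˢ S₂ := by
    intro p hp
    rw [Finset.mem_product]
    exact ⟨Finset.mem_image.mpr ⟨p, hp, rfl⟩, Finset.mem_image.mpr ⟨p, hp, rfl⟩⟩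
  rw [houter, ← Finset.sum_product', conv_invol_apply, Complex.ofReal_sum]
  rw [Finset.sum_subset hsub (fun p _ hnp => by
    rw [Finsupp.notMem_support_iff.mp hnp, zero_mul])]
  apply Finset.sum_congr rfl
  rintro ⟨i, j⟩ _
  show ((F i j : ℝ) : ℂ) = _
  rw [hF]
  simp only [Prod.mk_sub_mk, sub_zero]
  rw [Complex.mul_conj]
  rw [Complex.normSq_eq_norm_sq]

lemma pair_alg {m n : ℕ} {A B : ℤ → ℤ → ℂ} {w : ℂ}
    (hA : ∀ i j, ¬ matInBox m n i j → A i j = 0)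
    (hB : ∀ i j, ¬ matInBox m n i j → B i j = 0)
    (hc : ∀ δ₁ δ₂ : ℤ, matAutocorr A δ₁ δ₂ + matAutocorr B δ₁ δ₂ =
      if δ₁ = 0 ∧ δ₂ = 0 then w else 0) :
    toF m n A * invol (toF m n A) + toF m n B * invol (toF m n B)
      = AddMonoidAlgebra.single (0 : ℤ × ℤ) w := by
  have hA' : A = fun i j => toF m n A (i, j) := by
    funext i j; rw [toF_apply hA]
  have hB' : B = fun i j => toF m n B (i, j) := by
    funext i j; rw [toF_apply hB]
  apply invol_ext
  rintro ⟨δ₁, δ₂⟩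
  rw [R_add_apply, ← autocorr_eq, ← autocorr_eq, ← hA', ← hB', hc]
  rw [AddMonoidAlgebra.coeff_single, Finsupp.single_apply]
  by_cases h : δ₁ = 0 ∧ δ₂ = 0
  · obtain ⟨h1, h2⟩ := h
    subst h1; subst h2
    simp
    exact fun hh => absurd rfl hh
  · rw [if_neg h, if_neg (by
      intro hh
      exact h (by constructor <;> [exact (congrArg Prod.fst hh).symm; exact (congrArg Prod.snd hh).symm]))]

def psi (s m : ℕ) : (ℤ × ℤ) →+ (ℤ × ℤ) :=
  AddMonoidHom.mk' (fun p => ((s : ℤ) * p.1, (m : ℤ) * p.2))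
    (by intro p q; simp [Prod.ext_iff]; constructor <;> ring)

@[simp] lemma psi_apply (s m : ℕ) (p : ℤ × ℤ) :
    psi s m p = ((s : ℤ) * p.1, (m : ℤ) * p.2) := rfl

noncomputable def sig (s m : ℕ) : R →+* R := AddMonoidAlgebra.mapDomainRingHom ℂ (psi s m)

lemma sig_single (s m : ℕ) (a : ℤ × ℤ) (r : ℂ) :
    sig s m (AddMonoidAlgebra.single a r) = AddMonoidAlgebra.single (psi s m a) r := by
  show AddMonoidAlgebra.mapDomain (psi s m) (AddMonoidAlgebra.single a r) = _
  rw [AddMonoidAlgebra.mapDomain_single]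

lemma sig_invol (s m : ℕ) (x : R) : sig s m (invol x) = invol (sig s m x) := by
  induction x using AddMonoidAlgebra.induction_linear with
  | zero => simp
  | add u v hu hv => rw [invol_add, map_add, map_add, invol_add, hu, hv]
  | single a r =>
    rw [invol_single]
    rw [sig_single, sig_single, invol_single]
    congr 1
    simp [Prod.ext_iff]

lemma decomp_unique {s : ℕ} (hs : 0 < s) {r q : ℤ} (h0 : 0 ≤ r) (h1 : r < (s : ℤ)) {i : ℤ}
    (h : r + (s : ℤ) * q = i) : r = i % (s : ℤ) ∧ q = i / (s : ℤ) := by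
  have := (Int.ediv_emod_unique (a := i) (b := (s : ℤ)) (by exact_mod_cast hs)).mpr ⟨h, h0, h1⟩
  exact ⟨this.2.symm, this.1.symm⟩

lemma diamond {s m u₁ u₂ : ℕ} (hs : 0 < s) (hm : 0 < m)
    {P Q : ℤ → ℤ → ℂ}
    (hP : ∀ i j, ¬ matInBox s m i j → P i j = 0)
    (hQ : ∀ i j, ¬ matInBox u₁ u₂ i j → Q i j = 0)
    (i j : ℤ) :
    (toF s m P * sig s m (toF u₁ u₂ Q)) (i, j)
      = P (i % (s : ℤ)) (j % (m : ℤ)) * Q (i / (s : ℤ)) (j / (m : ℤ)) := by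
  classical
  have hsz : (0 : ℤ) < (s : ℤ) := by exact_mod_cast hs
  have hmz : (0 : ℤ) < (m : ℤ) := by exact_mod_cast hm
  rw [toF, toF, map_sum]
  simp_rw [sig_single]
  rw [Finset.sum_mul_sum]
  simp_rw [AddMonoidAlgebra.single_mul_single]
  simp only [R_sum_apply]
  rw [← Finset.sum_product']
  simp only [R_single_apply]
  have hcond : ∀ z : (ℤ × ℤ) × (ℤ × ℤ), z ∈ boxF s m ×ˢ boxF u₁ u₂ →
      (z.1 + psi s m z.2 = (i, j)) → z = ((i % (s:ℤ), j % (m:ℤ)), (i / (s:ℤ), j / (m:ℤ))) := by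
    rintro ⟨⟨p1, p2⟩, ⟨q1, q2⟩⟩ hz hc
    rw [Finset.mem_product] at hz
    obtain ⟨hzp, hzq⟩ := hz
    rw [mem_boxF] at hzp
    obtain ⟨hb1, hb2, hb3, hb4⟩ := hzp
    rw [psi_apply, Prod.ext_iff] at hc
    simp only [Prod.fst_add, Prod.snd_add] at hc
    obtain ⟨hc1, hc2⟩ := hc
    obtain ⟨he1, he2⟩ := decomp_unique hs hb1 hb2 hc1
    obtain ⟨hf1, hf2⟩ := decomp_unique hm hb3 hb4 hc2
    simp [Prod.ext_iff, ← he1, ← he2, ← hf1, ← hf2]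
  by_cases hq0 : ((i / (s:ℤ), j / (m:ℤ))) ∈ boxF u₁ u₂
  · rw [Finset.sum_eq_single_of_mem ((i % (s:ℤ), j % (m:ℤ)), (i / (s:ℤ), j / (m:ℤ)))]
    · rw [if_pos]
      rw [psi_apply, Prod.ext_iff]
      constructor
      · show i % (s:ℤ) + (s:ℤ) * (i / (s:ℤ)) = i
        exact Int.emod_add_mul_ediv i (s:ℤ)
      · show j % (m:ℤ) + (m:ℤ) * (j / (m:ℤ)) = j
        exact Int.emod_add_mul_ediv j (m:ℤ)
    · rw [Finset.mem_product]
      refine ⟨?_, hq0⟩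
      rw [mem_boxF]
      exact ⟨Int.emod_nonneg i (ne_of_gt hsz), Int.emod_lt_of_pos i hsz,
        Int.emod_nonneg j (ne_of_gt hmz), Int.emod_lt_of_pos j hmz⟩
    · intro z hz hne
      rw [if_neg]
      intro hc
      exact hne (hcond z hz hc)
  · rw [Finset.sum_eq_zero, hQ (i / (s:ℤ)) (j / (m:ℤ)) (by rwa [← mem_boxF (p := (i / (s:ℤ), j / (m:ℤ)))] ), mul_zero]
    intro z hz
    rw [if_neg]
    intro hc
    have := hcond z hz hc
    apply hq0
    rw [this] at hz
    rw [Finset.mem_product] at hz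
    exact hz.2

def Q4 (z : ℂ) : Prop := z = 1 ∨ z = -1 ∨ z = Complex.I ∨ z = -Complex.I

lemma Q4.mul {z w : ℂ} (hz : Q4 z) (hw : Q4 w) : Q4 (z * w) := by
  rcases hz with rfl | rfl | rfl | rfl <;> rcases hw with rfl | rfl | rfl | rfl <;>
    simp [Q4, Complex.I_mul_I] <;> ring_nf <;>
    simp [Complex.I_sq, Complex.I_mul_I]

lemma Q4.neg {z : ℂ} (hz : Q4 z) : Q4 (-z) := by
  rcases hz with rfl | rfl | rfl | rfl <;> simp [Q4]

lemma Q4.conj {z : ℂ} (hz : Q4 z) : Q4 ((starRingEnd ℂ) z) := by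
  rcases hz with rfl | rfl | rfl | rfl <;> simp [Q4, Complex.conj_I]

lemma toF_zero {m n : ℕ} {P : ℤ → ℤ → ℂ} (hP : ∀ i j, P i j = 0) : toF m n P = 0 := by
  rw [toF, Finset.sum_eq_zero]
  intro p hp
  rw [hP p.1 p.2]
  simp [AddMonoidAlgebra.single]

@[simp] lemma R_zero_apply (p : ℤ × ℤ) : (0 : R) p = 0 := rfl

lemma box_pos_left {u v : ℕ} {i j : ℤ} (h : matInBox u v i j) : 0 < u := by
  obtain ⟨h1, h2, h3, h4⟩ := h
  by_contra hc
  push_neg at hc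
  interval_cases u
  omega

lemma box_pos_right {u v : ℕ} {i j : ℤ} (h : matInBox u v i j) : 0 < v := by
  obtain ⟨h1, h2, h3, h4⟩ := h
  by_contra hc
  push_neg at hc
  interval_cases v
  omega

lemma prod_outside {s m u₁ u₂ : ℕ} {P Q : ℤ → ℤ → ℂ}
    (hP : ∀ i j, ¬ matInBox s m i j → P i j = 0)
    (hQ : ∀ i j, ¬ matInBox u₁ u₂ i j → Q i j = 0)
    (i j : ℤ) (hnb : ¬ matInBox (s * u₁) (m * u₂) i j) :
    (toF s m P * sig s m (toF u₁ u₂ Q)) (i, j) = 0 := by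
  rcases Nat.eq_zero_or_pos s with hs | hs
  · rw [toF_zero (fun i j => hP i j (by subst hs; rintro ⟨h1, h2, -⟩; omega)), zero_mul,
      R_zero_apply]
  rcases Nat.eq_zero_or_pos m with hm | hm
  · rw [toF_zero (fun i j => hP i j (by subst hm; rintro ⟨-, -, h3, h4⟩; omega)), zero_mul,
      R_zero_apply]
  have hsz : (0 : ℤ) < (s : ℤ) := by exact_mod_cast hs
  have hmz : (0 : ℤ) < (m : ℤ) := by exact_mod_cast hm
  rw [diamond hs hm hP hQ]
  suffices hq : ¬ matInBox u₁ u₂ (i / (s:ℤ)) (j / (m:ℤ)) by rw [hQ _ _ hq, mul_zero]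
  rintro ⟨hq1, hq2, hq3, hq4⟩
  apply hnb
  refine ⟨?_, ?_, ?_, ?_⟩
  · by_contra hc
    push_neg at hc
    exact absurd (Int.ediv_neg_of_neg_of_pos hc hsz) (by omega)
  · have := (Int.ediv_lt_iff_lt_mul hsz).mp hq2
    push_cast
    calc i < (u₁ : ℤ) * (s : ℤ) := this
    _ = (s : ℤ) * (u₁ : ℤ) := mul_comm _ _
  · by_contra hc
    push_neg at hc
    exact absurd (Int.ediv_neg_of_neg_of_pos hc hmz) (by omega)
  · have := (Int.ediv_lt_iff_lt_mul hmz).mp hq4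
    push_cast
    calc j < (u₂ : ℤ) * (m : ℤ) := this
    _ = (m : ℤ) * (u₂ : ℤ) := mul_comm _ _

lemma toF_neg {m n : ℕ} (P : ℤ → ℤ → ℂ) :
    toF m n (fun i j => -(P i j)) = - toF m n P := by
  rw [toF, toF, ← Finset.sum_neg_distrib]
  apply Finset.sum_congr rfl
  intro p hp
  exact AddMonoidAlgebra.single_neg p (P p.1 p.2)

lemma comb_quat {s mm u₁ u₂ : ℕ} {P P' Q Q' : ℤ → ℤ → ℂ}
    (hP : ∀ i j, ¬ matInBox s mm i j → P i j = 0)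
    (hP' : ∀ i j, ¬ matInBox s mm i j → P' i j = 0)
    (hQ : ∀ i j, ¬ matInBox u₁ u₂ i j → Q i j = 0)
    (hQ' : ∀ i j, ¬ matInBox u₁ u₂ i j → Q' i j = 0)
    (hPv : ∀ i j, matInBox s mm i j →
      (Q4 (P i j) ∧ P' i j = 0) ∨ (P i j = 0 ∧ Q4 (P' i j)))
    (hQv : ∀ i j, matInBox u₁ u₂ i j → Q4 (Q i j))
    (hQ'v : ∀ i j, matInBox u₁ u₂ i j → Q4 (Q' i j)) :
    matQuaternary (s * u₁) (mm * u₂)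
      (fun i j => (toF s mm P * sig s mm (toF u₁ u₂ Q)
        + toF s mm P' * sig s mm (toF u₁ u₂ Q')) (i, j)) := by
  constructor
  · intro i j hnb
    show (toF s mm P * sig s mm (toF u₁ u₂ Q)
        + toF s mm P' * sig s mm (toF u₁ u₂ Q')) (i, j) = 0
    rw [R_add_apply, prod_outside hP hQ i j hnb, prod_outside hP' hQ' i j hnb, add_zero]
  · intro i j hb
    have hsu : 0 < s * u₁ := box_pos_left hb
    have hmu : 0 < mm * u₂ := box_pos_right hb
    have hs : 0 < s := Nat.pos_of_ne_zero fun h => by subst h; simp at hsu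
    have hmm0 : 0 < mm := Nat.pos_of_ne_zero fun h => by subst h; simp at hmu
    have hsz : (0:ℤ) < (s:ℤ) := by exact_mod_cast hs
    have hmz : (0:ℤ) < (mm:ℤ) := by exact_mod_cast hmm0
    show Q4 ((toF s mm P * sig s mm (toF u₁ u₂ Q)
        + toF s mm P' * sig s mm (toF u₁ u₂ Q')) (i, j))
    rw [R_add_apply, diamond hs hmm0 hP hQ, diamond hs hmm0 hP' hQ']
    obtain ⟨b1, b2, b3, b4⟩ := hb
    have b2' : i < (u₁:ℤ) * (s:ℤ) := by
      push_cast at b2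
      linarith [mul_comm (s:ℤ) (u₁:ℤ)]
    have b4' : j < (u₂:ℤ) * (mm:ℤ) := by
      push_cast at b4
      linarith [mul_comm (mm:ℤ) (u₂:ℤ)]
    have hbox1 : matInBox s mm (i % (s:ℤ)) (j % (mm:ℤ)) :=
      ⟨Int.emod_nonneg i (ne_of_gt hsz), Int.emod_lt_of_pos i hsz,
        Int.emod_nonneg j (ne_of_gt hmz), Int.emod_lt_of_pos j hmz⟩
    have hbox2 : matInBox u₁ u₂ (i / (s:ℤ)) (j / (mm:ℤ)) :=
      ⟨Int.ediv_nonneg b1 (le_of_lt hsz), (Int.ediv_lt_iff_lt_mul hsz).mpr b2',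
        Int.ediv_nonneg b3 (le_of_lt hmz), (Int.ediv_lt_iff_lt_mul hmz).mpr b4'⟩
    rcases hPv _ _ hbox1 with ⟨hq4, hz⟩ | ⟨hz, hq4⟩
    · rw [hz, zero_mul, add_zero]
      exact Q4.mul hq4 (hQv _ _ hbox2)
    · rw [hz, zero_mul, zero_add]
      exact Q4.mul hq4 (hQ'v _ _ hbox2)

end GCM

/-- if quaternary GCM pairs of sizes s₁×s₂, s₁×s₃ and t₁×t₂ exist, then a
quaternary GCM quad of size s₁t₁ × (s₂+s₃)t₂ exists. -/

theorem stmt19 (s₁ s₂ s₃ t₁ t₂ : ℕ)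
    (h1 : QuatGCMPair s₁ s₂) (h2 : QuatGCMPair s₁ s₃) (h3 : QuatGCMPair t₁ t₂) :
    QuatGCMQuad (s₁ * t₁) ((s₂ + s₃) * t₂) := by
  classical
  open GCM in
  obtain ⟨A, B, hAq, hBq, hAB⟩ := h1
  obtain ⟨C, D, hCq, hDq, hCD⟩ := h2
  obtain ⟨E, F, hEq, hFq, hEF⟩ := h3
  set m : ℕ := s₂ + s₃ with hm
  -- support facts
  have hA' : ∀ i j, ¬ matInBox s₁ m i j → A i j = 0 := by
    intro i j h
    refine hAq.1 i j fun hb => h ?_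
    obtain ⟨h1, h2, h3, h4⟩ := hb
    have h5 : (m:ℤ) = (s₂:ℤ) + (s₃:ℤ) := by push_cast [hm]; ring
    exact ⟨h1, h2, h3, by omega⟩
  have hB' : ∀ i j, ¬ matInBox s₁ m i j → B i j = 0 := by
    intro i j h
    refine hBq.1 i j fun hb => h ?_
    obtain ⟨h1, h2, h3, h4⟩ := hb
    have h5 : (m:ℤ) = (s₂:ℤ) + (s₃:ℤ) := by push_cast [hm]; ring
    exact ⟨h1, h2, h3, by omega⟩
  have hC0 : ∀ i j, ¬ matInBox s₁ m i j → C i j = 0 := by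
    intro i j h
    refine hCq.1 i j fun hb => h ?_
    obtain ⟨h1, h2, h3, h4⟩ := hb
    have h5 : (m:ℤ) = (s₂:ℤ) + (s₃:ℤ) := by push_cast [hm]; ring
    exact ⟨h1, h2, h3, by omega⟩
  have hD0 : ∀ i j, ¬ matInBox s₁ m i j → D i j = 0 := by
    intro i j h
    refine hDq.1 i j fun hb => h ?_
    obtain ⟨h1, h2, h3, h4⟩ := hb
    have h5 : (m:ℤ) = (s₂:ℤ) + (s₃:ℤ) := by push_cast [hm]; ring
    exact ⟨h1, h2, h3, by omega⟩
  set C' : ℤ → ℤ → ℂ := fun i j => C i (j - (s₂:ℤ)) with hC'def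
  set D' : ℤ → ℤ → ℂ := fun i j => D i (j - (s₂:ℤ)) with hD'def
  set Et : ℤ → ℤ → ℂ := fun i j => (starRingEnd ℂ) (E ((t₁:ℤ) - 1 - i) ((t₂:ℤ) - 1 - j))
    with hEtdef
  set Ft : ℤ → ℤ → ℂ := fun i j => (starRingEnd ℂ) (F ((t₁:ℤ) - 1 - i) ((t₂:ℤ) - 1 - j))
    with hFtdef
  have hC' : ∀ i j, ¬ matInBox s₁ m i j → C' i j = 0 := by
    intro i j h
    rw [hC'def]
    simp only []
    refine hCq.1 i (j - s₂) fun hb => h ?_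
    obtain ⟨h1, h2, h3, h4⟩ := hb
    have h5 : (m:ℤ) = (s₂:ℤ) + (s₃:ℤ) := by push_cast [hm]; ring
    exact ⟨h1, h2, by omega, by omega⟩
  have hD' : ∀ i j, ¬ matInBox s₁ m i j → D' i j = 0 := by
    intro i j h
    rw [hD'def]
    simp only []
    refine hDq.1 i (j - s₂) fun hb => h ?_
    obtain ⟨h1, h2, h3, h4⟩ := hb
    have h5 : (m:ℤ) = (s₂:ℤ) + (s₃:ℤ) := by push_cast [hm]; ring
    exact ⟨h1, h2, by omega, by omega⟩
  have hEt : ∀ i j, ¬ matInBox t₁ t₂ i j → Et i j = 0 := by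
    intro i j h
    rw [hEtdef]
    simp only []
    rw [hEq.1 _ _ fun hb => h (by obtain ⟨h1, h2, h3, h4⟩ := hb; exact ⟨by omega, by omega, by omega, by omega⟩), map_zero]
  have hFt : ∀ i j, ¬ matInBox t₁ t₂ i j → Ft i j = 0 := by
    intro i j h
    rw [hFtdef]
    simp only []
    rw [hFq.1 _ _ fun hb => h (by obtain ⟨h1, h2, h3, h4⟩ := hb; exact ⟨by omega, by omega, by omega, by omega⟩), map_zero]
  -- algebra elements
  set aR : GCM.R := GCM.toF s₁ m A with haR
  set bR : GCM.R := GCM.toF s₁ m B with hbR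
  set cR : GCM.R := GCM.toF s₁ m C' with hcR
  set dR : GCM.R := GCM.toF s₁ m D' with hdR
  set X : GCM.R := GCM.sig s₁ m (GCM.toF t₁ t₂ E) with hX
  set Y : GCM.R := GCM.sig s₁ m (GCM.toF t₁ t₂ F) with hY
  set Xt : GCM.R := GCM.sig s₁ m (GCM.toF t₁ t₂ Et) with hXt
  set Yt : GCM.R := GCM.sig s₁ m (GCM.toF t₁ t₂ Ft) with hYt
  set g₁ : GCM.R := aR * X + cR * Y with hg₁
  set g₂ : GCM.R := bR * X + dR * Y with hg₂
  set g₃ : GCM.R := aR * Yt - cR * Xt with hg₃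
  set g₄ : GCM.R := bR * Yt - dR * Xt with hg₄
  set w₁ : ℂ := ((matWeight A + matWeight B : ℝ) : ℂ) with hw₁
  set w₂ : ℂ := ((matWeight C + matWeight D : ℝ) : ℂ) with hw₂
  set w₃ : ℂ := ((matWeight E + matWeight F : ℝ) : ℂ) with hw₃
  -- pair relations
  have hR1 : aR * GCM.invol aR + bR * GCM.invol bR = AddMonoidAlgebra.single (0 : ℤ × ℤ) w₁ :=
    GCM.pair_alg hA' hB' hAB
  have hR20 : GCM.toF s₁ m C * GCM.invol (GCM.toF s₁ m C)
      + GCM.toF s₁ m D * GCM.invol (GCM.toF s₁ m D) = AddMonoidAlgebra.single (0 : ℤ × ℤ) w₂ :=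
    GCM.pair_alg hC0 hD0 hCD
  have hcshift : cR = AddMonoidAlgebra.single ((0:ℤ), (s₂:ℤ)) 1 * GCM.toF s₁ m C := by
    apply GCM.invol_ext
    rintro ⟨i, j⟩
    rw [hcR, GCM.toF_apply hC', AddMonoidAlgebra.coeff_single_mul_apply,
      show (-(((0:ℤ), (s₂:ℤ))) + (i, j)) = (i, j - (s₂:ℤ)) by
        simp [Prod.ext_iff]; ring,
      GCM.toF_apply hC0, one_mul]
  have hdshift : dR = AddMonoidAlgebra.single ((0:ℤ), (s₂:ℤ)) 1 * GCM.toF s₁ m D := by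
    apply GCM.invol_ext
    rintro ⟨i, j⟩
    rw [hdR, GCM.toF_apply hD', AddMonoidAlgebra.coeff_single_mul_apply,
      show (-(((0:ℤ), (s₂:ℤ))) + (i, j)) = (i, j - (s₂:ℤ)) by
        simp [Prod.ext_iff]; ring,
      GCM.toF_apply hD0, one_mul]
  have hR2 : cR * GCM.invol cR + dR * GCM.invol dR = AddMonoidAlgebra.single (0 : ℤ × ℤ) w₂ := by
    rw [hcshift, hdshift, GCM.invol_mul, GCM.invol_mul, GCM.invol_single]
    have hu : (AddMonoidAlgebra.single ((0:ℤ), (s₂:ℤ)) 1 : GCM.R)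
        * AddMonoidAlgebra.single (-((0:ℤ), (s₂:ℤ))) ((starRingEnd ℂ) 1) = 1 := by
      rw [AddMonoidAlgebra.single_mul_single]
      simp [AddMonoidAlgebra.one_def]
      rfl
    linear_combination (GCM.toF s₁ m C * GCM.invol (GCM.toF s₁ m C)
      + GCM.toF s₁ m D * GCM.invol (GCM.toF s₁ m D)) * hu + hR20
  have hR3 : X * GCM.invol X + Y * GCM.invol Y = AddMonoidAlgebra.single (0 : ℤ × ℤ) w₃ := by
    have h0 : GCM.toF t₁ t₂ E * GCM.invol (GCM.toF t₁ t₂ E)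
        + GCM.toF t₁ t₂ F * GCM.invol (GCM.toF t₁ t₂ F)
        = AddMonoidAlgebra.single (0 : ℤ × ℤ) w₃ := GCM.pair_alg hEq.1 hFq.1 hEF
    rw [hX, hY, ← GCM.sig_invol, ← GCM.sig_invol, ← map_mul, ← map_mul, ← map_add, h0,
      GCM.sig_single, map_zero]
  -- reversal relations
  set v : GCM.R := AddMonoidAlgebra.single (GCM.psi s₁ m ((t₁:ℤ) - 1, (t₂:ℤ) - 1)) 1 with hv
  have hrevE : GCM.toF t₁ t₂ Et
      = AddMonoidAlgebra.single (((t₁:ℤ) - 1, (t₂:ℤ) - 1)) 1 * GCM.invol (GCM.toF t₁ t₂ E) := by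
    apply GCM.invol_ext
    rintro ⟨i, j⟩
    rw [GCM.toF_apply hEt, AddMonoidAlgebra.coeff_single_mul_apply, one_mul, GCM.invol_apply,
      show (-(-(((t₁:ℤ) - 1, (t₂:ℤ) - 1)) + (i, j))) = ((t₁:ℤ) - 1 - i, (t₂:ℤ) - 1 - j) by
        simp [Prod.ext_iff]; constructor <;> ring,
      GCM.toF_apply hEq.1]
  have hrevF : GCM.toF t₁ t₂ Ft
      = AddMonoidAlgebra.single (((t₁:ℤ) - 1, (t₂:ℤ) - 1)) 1 * GCM.invol (GCM.toF t₁ t₂ F) := by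
    apply GCM.invol_ext
    rintro ⟨i, j⟩
    rw [GCM.toF_apply hFt, AddMonoidAlgebra.coeff_single_mul_apply, one_mul, GCM.invol_apply,
      show (-(-(((t₁:ℤ) - 1, (t₂:ℤ) - 1)) + (i, j))) = ((t₁:ℤ) - 1 - i, (t₂:ℤ) - 1 - j) by
        simp [Prod.ext_iff]; constructor <;> ring,
      GCM.toF_apply hFq.1]
  have hXtv : Xt = v * GCM.invol X := by
    rw [hXt, hrevE, map_mul, GCM.sig_single, GCM.sig_invol, hv, hX]
  have hYtv : Yt = v * GCM.invol Y := by
    rw [hYt, hrevF, map_mul, GCM.sig_single, GCM.sig_invol, hv, hY]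
  have hvv : v * GCM.invol v = 1 := by
    rw [hv, GCM.invol_single, AddMonoidAlgebra.single_mul_single]
    simp [AddMonoidAlgebra.one_def]
    rfl
  -- the big identity
  have hbig : g₁ * GCM.invol g₁ + g₂ * GCM.invol g₂ + g₃ * GCM.invol g₃ + g₄ * GCM.invol g₄
      = AddMonoidAlgebra.single (0 : ℤ × ℤ) ((w₁ + w₂) * w₃) := by
    have hW : (AddMonoidAlgebra.single (0 : ℤ × ℤ) w₁ + AddMonoidAlgebra.single (0 : ℤ × ℤ) w₂)
        * AddMonoidAlgebra.single (0 : ℤ × ℤ) w₃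
        = AddMonoidAlgebra.single (0 : ℤ × ℤ) ((w₁ + w₂) * w₃) := by
      rw [add_mul, AddMonoidAlgebra.single_mul_single, AddMonoidAlgebra.single_mul_single]
      rw [show ((0:ℤ×ℤ) + 0) = 0 by simp, ← AddMonoidAlgebra.single_add]
      congr 1
      ring
    rw [← hW]
    rw [hg₁, hg₂, hg₃, hg₄, hXtv, hYtv]
    simp only [GCM.invol_add, GCM.invol_sub, GCM.invol_mul, GCM.invol_invol]
    linear_combination (X * GCM.invol X + Y * GCM.invol Y) * hR1
      + (X * GCM.invol X + Y * GCM.invol Y) * hR2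
      + (AddMonoidAlgebra.single (0 : ℤ × ℤ) w₁ + AddMonoidAlgebra.single (0 : ℤ × ℤ) w₂) * hR3
      + (aR * GCM.invol aR * (Y * GCM.invol Y) + cR * GCM.invol cR * (X * GCM.invol X)
        - aR * GCM.invol cR * (X * GCM.invol Y) - GCM.invol aR * cR * (GCM.invol X * Y)
        + bR * GCM.invol bR * (Y * GCM.invol Y) + dR * GCM.invol dR * (X * GCM.invol X)
        - bR * GCM.invol dR * (X * GCM.invol Y) - GCM.invol bR * dR * (GCM.invol X * Y)) * hvv
  -- negated block matrices for the subtraction cases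
  set C'' : ℤ → ℤ → ℂ := fun i j => -(C' i j) with hC''def
  set D'' : ℤ → ℤ → ℂ := fun i j => -(D' i j) with hD''def
  have hC'' : ∀ i j, ¬ matInBox s₁ m i j → C'' i j = 0 := by
    intro i j h
    rw [hC''def]
    simp only []
    rw [hC' i j h, neg_zero]
  have hD'' : ∀ i j, ¬ matInBox s₁ m i j → D'' i j = 0 := by
    intro i j h
    rw [hD''def]
    simp only []
    rw [hD' i j h, neg_zero]
  have hcRn : GCM.toF s₁ m C'' = - cR := by
    rw [hC''def, hcR]
    exact GCM.toF_neg C'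
  have hdRn : GCM.toF s₁ m D'' = - dR := by
    rw [hD''def, hdR]
    exact GCM.toF_neg D'
  have hmcast : (m:ℤ) = (s₂:ℤ) + (s₃:ℤ) := by push_cast [hm]; ring
  -- exactly-one-block values
  have hPvAC : ∀ i j, matInBox s₁ m i j →
      (GCM.Q4 (A i j) ∧ C' i j = 0) ∨ (A i j = 0 ∧ GCM.Q4 (C' i j)) := by
    intro i j hbx
    obtain ⟨b1, b2, b3, b4⟩ := hbx
    by_cases hc : j < (s₂:ℤ)
    · left
      refine ⟨hAq.2 _ _ ⟨b1, b2, b3, hc⟩, ?_⟩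
      rw [hC'def]
      simp only []
      exact hCq.1 _ _ fun hbb => by obtain ⟨c1, c2, c3, c4⟩ := hbb; omega
    · right
      refine ⟨hAq.1 _ _ fun hbb => by obtain ⟨c1, c2, c3, c4⟩ := hbb; omega, ?_⟩
      rw [hC'def]
      simp only []
      exact hCq.2 _ _ ⟨b1, b2, by omega, by omega⟩
  have hPvBD : ∀ i j, matInBox s₁ m i j →
      (GCM.Q4 (B i j) ∧ D' i j = 0) ∨ (B i j = 0 ∧ GCM.Q4 (D' i j)) := by
    intro i j hbx
    obtain ⟨b1, b2, b3, b4⟩ := hbx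
    by_cases hc : j < (s₂:ℤ)
    · left
      refine ⟨hBq.2 _ _ ⟨b1, b2, b3, hc⟩, ?_⟩
      rw [hD'def]
      simp only []
      exact hDq.1 _ _ fun hbb => by obtain ⟨c1, c2, c3, c4⟩ := hbb; omega
    · right
      refine ⟨hBq.1 _ _ fun hbb => by obtain ⟨c1, c2, c3, c4⟩ := hbb; omega, ?_⟩
      rw [hD'def]
      simp only []
      exact hDq.2 _ _ ⟨b1, b2, by omega, by omega⟩
  have hPvAC' : ∀ i j, matInBox s₁ m i j →
      (GCM.Q4 (A i j) ∧ C'' i j = 0) ∨ (A i j = 0 ∧ GCM.Q4 (C'' i j)) := by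
    intro i j hbx
    rcases hPvAC i j hbx with ⟨h1, h2⟩ | ⟨h1, h2⟩
    · left
      refine ⟨h1, ?_⟩
      rw [hC''def]
      simp only []
      rw [h2, neg_zero]
    · right
      refine ⟨h1, ?_⟩
      rw [hC''def]
      simp only []
      exact GCM.Q4.neg h2
  have hPvBD' : ∀ i j, matInBox s₁ m i j →
      (GCM.Q4 (B i j) ∧ D'' i j = 0) ∨ (B i j = 0 ∧ GCM.Q4 (D'' i j)) := by
    intro i j hbx
    rcases hPvBD i j hbx with ⟨h1, h2⟩ | ⟨h1, h2⟩
    · left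
      refine ⟨h1, ?_⟩
      rw [hD''def]
      simp only []
      rw [h2, neg_zero]
    · right
      refine ⟨h1, ?_⟩
      rw [hD''def]
      simp only []
      exact GCM.Q4.neg h2
  have hQvE : ∀ i j, matInBox t₁ t₂ i j → GCM.Q4 (E i j) := fun i j hb => hEq.2 i j hb
  have hQvF : ∀ i j, matInBox t₁ t₂ i j → GCM.Q4 (F i j) := fun i j hb => hFq.2 i j hb
  have hQvEt : ∀ i j, matInBox t₁ t₂ i j → GCM.Q4 (Et i j) := by
    intro i j hb
    obtain ⟨b1, b2, b3, b4⟩ := hb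
    rw [hEtdef]
    simp only []
    exact GCM.Q4.conj (hEq.2 _ _ ⟨by omega, by omega, by omega, by omega⟩)
  have hQvFt : ∀ i j, matInBox t₁ t₂ i j → GCM.Q4 (Ft i j) := by
    intro i j hb
    obtain ⟨b1, b2, b3, b4⟩ := hb
    rw [hFtdef]
    simp only []
    exact GCM.Q4.conj (hFq.2 _ _ ⟨by omega, by omega, by omega, by omega⟩)
  -- rewriting the subtraction forms as sums
  have hg₃' : g₃ = GCM.toF s₁ m A * GCM.sig s₁ m (GCM.toF t₁ t₂ Ft)
      + GCM.toF s₁ m C'' * GCM.sig s₁ m (GCM.toF t₁ t₂ Et) := by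
    rw [hg₃, hcRn, haR, hYt, hXt]
    ring
  have hg₄' : g₄ = GCM.toF s₁ m B * GCM.sig s₁ m (GCM.toF t₁ t₂ Ft)
      + GCM.toF s₁ m D'' * GCM.sig s₁ m (GCM.toF t₁ t₂ Et) := by
    rw [hg₄, hdRn, hbR, hYt, hXt]
    ring
  refine ⟨fun i j => g₁ (i, j), fun i j => g₂ (i, j), fun i j => g₃ (i, j),
    fun i j => g₄ (i, j), ?_, ?_, ?_, ?_, ?_⟩
  · simp only [hg₁, haR, hcR, hX, hY]
    exact GCM.comb_quat hA' hC' hEq.1 hFq.1 hPvAC hQvE hQvF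
  · simp only [hg₂, hbR, hdR, hX, hY]
    exact GCM.comb_quat hB' hD' hEq.1 hFq.1 hPvBD hQvE hQvF
  · simp only [hg₃']
    exact GCM.comb_quat hA' hC'' hFt hEt hPvAC' hQvFt hQvEt
  · simp only [hg₄']
    exact GCM.comb_quat hB' hD'' hFt hEt hPvBD' hQvFt hQvEt
  · intro δ₁ δ₂
    rw [GCM.autocorr_eq g₁ δ₁ δ₂, GCM.autocorr_eq g₂ δ₁ δ₂, GCM.autocorr_eq g₃ δ₁ δ₂,
      GCM.autocorr_eq g₄ δ₁ δ₂]
    rw [show (g₁ * GCM.invol g₁) (δ₁, δ₂) + (g₂ * GCM.invol g₂) (δ₁, δ₂)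
        + (g₃ * GCM.invol g₃) (δ₁, δ₂) + (g₄ * GCM.invol g₄) (δ₁, δ₂)
        = (g₁ * GCM.invol g₁ + g₂ * GCM.invol g₂ + g₃ * GCM.invol g₃ + g₄ * GCM.invol g₄)
          (δ₁, δ₂) by simp [GCM.R_add_apply], hbig, GCM.R_single_apply]
    have e : ((matWeight (fun i j => g₁ (i, j)) + matWeight (fun i j => g₂ (i, j))
        + matWeight (fun i j => g₃ (i, j)) + matWeight (fun i j => g₄ (i, j)) : ℝ) : ℂ)
        = (w₁ + w₂) * w₃ := by
      push_cast
      rw [GCM.weight_eq g₁, GCM.weight_eq g₂, GCM.weight_eq g₃, GCM.weight_eq g₄]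
      rw [show (g₁ * GCM.invol g₁) ((0:ℤ), (0:ℤ)) + (g₂ * GCM.invol g₂) ((0:ℤ), (0:ℤ))
          + (g₃ * GCM.invol g₃) ((0:ℤ), (0:ℤ)) + (g₄ * GCM.invol g₄) ((0:ℤ), (0:ℤ))
          = (g₁ * GCM.invol g₁ + g₂ * GCM.invol g₂ + g₃ * GCM.invol g₃ + g₄ * GCM.invol g₄)
            ((0:ℤ), (0:ℤ)) by simp [GCM.R_add_apply], hbig, GCM.R_single_apply,
        if_pos (show (0:ℤ×ℤ) = ((0:ℤ), (0:ℤ)) by simp [Prod.ext_iff])]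
    by_cases h : δ₁ = 0 ∧ δ₂ = 0
    · obtain ⟨rfl, rfl⟩ := h
      rw [if_pos (show (0:ℤ×ℤ) = ((0:ℤ), (0:ℤ)) by simp [Prod.ext_iff]),
        if_pos ⟨rfl, rfl⟩]
      exact e.symm
    · rw [if_neg (fun he => h ⟨(congrArg Prod.fst he).symm, (congrArg Prod.snd he).symm⟩),
        if_neg h]
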